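/- Whether rank([[α, xᵀ],[y, B]]) = rank(B) + 2 holds does not depend on the scalar α: if it holds for some α ∈ F, then it holds for every α ∈ F. -/

import Mathlib

set_option maxHeartbeats 1000000
set_option synthInstance.maxHeartbeats 400000

open Matrix Module Submodule LinearMap

theorem stmt_6 {F : Type*} [Field F] {m : ℕ}
    (B : Matrix (Fin m) (Fin m) F) (x y : Fin m → F)
    (M : F → Matrix (Fin 1 ⊕ Fin m) (Fin 1 ⊕ Fin m) F)
    (hM : ∀ α, M α = Matrix.fromBlocks (Matrix.of fun _ _ => α) (Matrix.of fun _ j => x j)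
      (Matrix.of fun i _ => y i) B)
    (h : ∃ α : F, (M α).rank = B.rank + 2) :
    ∀ α : F, (M α).rank = B.rank + 2 := by
  classical
  let π : (Fin 1 ⊕ Fin m → F) →ₗ[F] (Fin m → F) := LinearMap.funLeft F F Sum.inr
  let e : Fin 1 ⊕ Fin m → F := Sum.elim 1 0
  have he0 : e ≠ 0 := by
    intro hc
    have := congrFun hc (Sum.inl 0)
    simp [e] at this
  -- expansion of M α *ᵥ w
  have hmv : ∀ (α : F) (w : Fin 1 ⊕ Fin m → F), M α *ᵥ w =
      Sum.elim (fun _ => α * w (Sum.inl 0) + x ⬝ᵥ (w ∘ Sum.inr))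
        (fun i => w (Sum.inl 0) * y i + (B *ᵥ (w ∘ Sum.inr)) i) := by
    intro α w
    funext j
    cases j with
    | inl j =>
      simp [hM, Matrix.mulVec, dotProduct, Fintype.sum_sum_type,
        Matrix.fromBlocks, Function.comp]
    | inr i =>
      simp [hM, Matrix.mulVec, dotProduct, Fintype.sum_sum_type,
        Matrix.fromBlocks, Function.comp, mul_comm]
  -- the column space of M α
  let S : F → Submodule F (Fin 1 ⊕ Fin m → F) := fun α => LinearMap.range (M α).mulVecLin
  have hrank : ∀ α, (M α).rank = finrank F (S α) := fun α => rfl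
  -- the image of S α under π is independent of α
  let N : Matrix (Fin m) (Fin 1 ⊕ Fin m) F :=
    Matrix.of fun i j => Sum.elim (fun (_ : Fin 1) => y i) (fun k => B i k) j
  have hcomp : ∀ α, π ∘ₗ (M α).mulVecLin = N.mulVecLin := by
    intro α
    ext w i
    simp [π, LinearMap.funLeft, hmv, N, Matrix.mulVec, dotProduct,
      Fintype.sum_sum_type, mul_comm]
  let W : Submodule F (Fin m → F) := LinearMap.range N.mulVecLin
  have hmapW : ∀ α, (S α).map π = W := by
    intro α
    rw [show (S α).map π = LinearMap.range (π ∘ₗ (M α).mulVecLin) from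
      (LinearMap.range_comp _ _).symm, hcomp]
  -- rank-nullity decomposition
  have hdecomp : ∀ α, finrank F (S α) =
      finrank F W + finrank F (LinearMap.ker (π ∘ₗ (S α).subtype)) := by
    intro α
    have := LinearMap.finrank_range_add_finrank_ker (π ∘ₗ (S α).subtype)
    rw [LinearMap.range_comp, Submodule.range_subtype, hmapW α] at this
    exact this.symm
  -- the kernel of π restricted to any subspace has dimension at most 1
  have hker_le : ∀ α, finrank F (LinearMap.ker (π ∘ₗ (S α).subtype)) ≤ 1 := by
    intro α
    set f := π ∘ₗ (S α).subtype
    let g : LinearMap.ker f →ₗ[F] F :=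
      (LinearMap.proj (Sum.inl 0 : Fin 1 ⊕ Fin m)) ∘ₗ ((S α).subtype ∘ₗ (LinearMap.ker f).subtype)
    have hg : Function.Injective g := by
      rw [injective_iff_map_eq_zero]
      rintro ⟨⟨v, hvS⟩, hvk⟩ hz
      have hπ : π v = 0 := hvk
      have h0 : v (Sum.inl 0) = 0 := hz
      have hv : v = 0 := by
        funext j
        cases j with
        | inl j =>
          have : j = 0 := Subsingleton.elim _ _
          rw [this]; exact h0
        | inr i => exact congrFun hπ i
      apply Subtype.ext; apply Subtype.ext; exact hv
    calc finrank F (LinearMap.ker f) ≤ finrank F F :=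
          LinearMap.finrank_le_finrank_of_injective hg
      _ = 1 := Module.finrank_self F
  -- if e belongs to S α then the kernel has dimension exactly 1
  have hker_ge : ∀ α, e ∈ S α → 1 ≤ finrank F (LinearMap.ker (π ∘ₗ (S α).subtype)) := by
    intro α heS
    have hπe : π e = 0 := by funext i; rfl
    have hz : (⟨⟨e, heS⟩, LinearMap.mem_ker.mpr hπe⟩ :
        LinearMap.ker (π ∘ₗ (S α).subtype)) ≠ 0 := by
      intro hc
      exact he0 (congrArg
        (fun z : LinearMap.ker (π ∘ₗ (S α).subtype) => ((z : S α) : Fin 1 ⊕ Fin m → F)) hc)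
    have : Nontrivial (LinearMap.ker (π ∘ₗ (S α).subtype)) := ⟨_, _, hz⟩
    exact (Module.finrank_pos_iff (R := F)).mpr this
  -- W is spanned by y and the columns of B
  have hW_le_sup : W ≤ (F ∙ y) ⊔ LinearMap.range B.mulVecLin := by
    rintro v ⟨w, rfl⟩
    have : N.mulVecLin w = w (Sum.inl 0) • y + B *ᵥ (w ∘ Sum.inr) := by
      funext i
      simp [N, Matrix.mulVecLin, Matrix.mulVec, dotProduct,
        Fintype.sum_sum_type, mul_comm]
    rw [this]
    exact Submodule.add_mem_sup (Submodule.smul_mem _ _ (Submodule.mem_span_singleton_self y))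
      ⟨w ∘ Sum.inr, rfl⟩
  have hW_le : finrank F W ≤ B.rank + 1 := by
    have h1 : finrank F ((F ∙ y) ⊔ LinearMap.range B.mulVecLin : Submodule F (Fin m → F))
        ≤ finrank F (F ∙ y) + finrank F (LinearMap.range B.mulVecLin) := by
      have := Submodule.finrank_sup_add_finrank_inf_eq (F ∙ y) (LinearMap.range B.mulVecLin)
      omega
    have h2 : finrank F (F ∙ y : Submodule F (Fin m → F)) ≤ 1 := by
      by_cases hy : y = 0
      · rw [hy, Submodule.span_zero_singleton, finrank_bot]
        omega
      · rw [finrank_span_singleton hy]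
    have h3 := Submodule.finrank_mono hW_le_sup
    have hB : B.rank = finrank F (LinearMap.range B.mulVecLin) := rfl
    omega
  -- main argument
  obtain ⟨α₀, h₀⟩ := h
  rw [hrank, hdecomp] at h₀
  have hk₀ : 1 ≤ finrank F (LinearMap.ker (π ∘ₗ (S α₀).subtype)) := by
    have := hker_le α₀
    omega
  have hWrank : finrank F W = B.rank + 1 := by
    have := hker_le α₀
    omega
  -- y is not in the column space of B
  have hy : y ∉ LinearMap.range B.mulVecLin := by
    intro hy
    have hle : W ≤ LinearMap.range B.mulVecLin := by
      refine le_trans hW_le_sup (sup_le ?_ le_rfl)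
      rwa [Submodule.span_singleton_le_iff_mem]
    have := Submodule.finrank_mono hle
    have hB : B.rank = finrank F (LinearMap.range B.mulVecLin) := rfl
    omega
  -- extract e ∈ S α₀
  have heS₀ : e ∈ S α₀ := by
    have : Nontrivial (LinearMap.ker (π ∘ₗ (S α₀).subtype)) := by
      rw [← Module.finrank_pos_iff (R := F)]
      omega
    obtain ⟨z, hz⟩ := exists_ne (0 : LinearMap.ker (π ∘ₗ (S α₀).subtype))
    set v : Fin 1 ⊕ Fin m → F := ((z : S α₀) : Fin 1 ⊕ Fin m → F) with hv
    have hvS : v ∈ S α₀ := (z : S α₀).2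
    have hπv : π v = 0 := LinearMap.mem_ker.mp z.2
    have hvinr : ∀ i, v (Sum.inr i) = 0 := fun i => congrFun hπv i
    have hvne : v ≠ 0 := by
      intro hc
      exact hz (Subtype.ext (Subtype.ext hc))
    have hc0 : v (Sum.inl 0) ≠ 0 := by
      intro hc
      apply hvne
      funext j
      cases j with
      | inl j => rw [Subsingleton.elim j 0]; exact hc
      | inr i => exact hvinr i
    have : e = (v (Sum.inl 0))⁻¹ • v := by
      funext j
      cases j with
      | inl j =>
        simp only [Pi.smul_apply, smul_eq_mul]
        rw [Subsingleton.elim j 0, inv_mul_cancel₀ hc0]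
        rfl
      | inr i =>
        simp only [Pi.smul_apply, smul_eq_mul, hvinr i, mul_zero]
        rfl
    rw [this]
    exact Submodule.smul_mem _ _ hvS
  -- extract the special vector u
  obtain ⟨w, hw⟩ := heS₀
  have hwinr : ∀ i, w (Sum.inl 0) * y i + (B *ᵥ (w ∘ Sum.inr)) i = 0 := by
    intro i
    have := congrFun hw (Sum.inr i)
    rw [show (M α₀).mulVecLin w = M α₀ *ᵥ w from rfl, hmv] at this
    simpa [e] using this
  have ht : w (Sum.inl 0) = 0 := by
    by_contra ht
    apply hy
    refine ⟨(-(w (Sum.inl 0))⁻¹) • (w ∘ Sum.inr), ?_⟩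
    funext i
    have := hwinr i
    have hB : B.mulVecLin ((-(w (Sum.inl 0))⁻¹) • (w ∘ Sum.inr))
        = (-(w (Sum.inl 0))⁻¹) • (B *ᵥ (w ∘ Sum.inr)) := map_smul _ _ _
    rw [hB, Pi.smul_apply, smul_eq_mul]
    have hinv : (w (Sum.inl 0))⁻¹ * w (Sum.inl 0) = 1 := inv_mul_cancel₀ ht
    linear_combination (-(w (Sum.inl 0))⁻¹) * this + y i * hinv
  have hBu : B *ᵥ (w ∘ Sum.inr) = 0 := by
    funext i
    have := hwinr i
    rw [ht] at this
    simpa using this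
  have hxu : x ⬝ᵥ (w ∘ Sum.inr) = 1 := by
    have := congrFun hw (Sum.inl 0)
    rw [show (M α₀).mulVecLin w = M α₀ *ᵥ w from rfl, hmv] at this
    simp only [Sum.elim_inl, ht, mul_zero, zero_add] at this
    simpa [e] using this
  -- now conclude for every α
  intro α
  have heS : e ∈ S α := by
    refine ⟨Sum.elim 0 (w ∘ Sum.inr), ?_⟩
    rw [show (M α).mulVecLin _ = M α *ᵥ _ from rfl, hmv]
    funext j
    cases j with
    | inl j => simp [e, hxu]
    | inr i => simpa [e] using congrFun hBu i
  have hk : finrank F (LinearMap.ker (π ∘ₗ (S α).subtype)) = 1 :=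
    le_antisymm (hker_le α) (hker_ge α heS)
  rw [hrank, hdecomp, hk, hWrank]
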